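/- For every n ∈ ℕ and every OL formula φ all of whose resource bounds are at most n, the chain-fan models are OL-indistinguishable at their initial states: (M_{n+2}, s₁) ⊨ φ iff (M_{n+3}, s₁) ⊨ φ. -/
import Mathlib


set_option linter.unusedVariables false

/-! ## Models -/

structure Mdl (S : Type) where
  rel : S → S → Prop
  val : ℕ → Set S
  cost : S → S → ℕ

namespace Mdl
variable {S : Type}

/-- A proper model: serial relation and positive costs. -/
def IsModel (M : Mdl S) : Prop := (∀ s, ∃ t, M.rel s t) ∧ ∀ s t, 0 < M.cost s t

def Serial (M : Mdl S) : Prop := ∀ s, ∃ t, M.rel s t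

def remove (M : Mdl S) (A : Set (S × S)) : Mdl S :=
  { M with rel := fun a b => M.rel a b ∧ (a, b) ∉ A }

def add (M : Mdl S) (A : Set (S × S)) : Mdl S :=
  { M with rel := fun a b => M.rel a b ∨ (a, b) ∈ A }

/-- The set of edges `A` is finite with total cost at most `n`. -/
def costLe (M : Mdl S) (A : Set (S × S)) (n : ℕ) : Prop :=
  ∃ F : Finset (S × S), A = ↑F ∧ ∑ e ∈ F, M.cost e.1 e.2 ≤ n

end Mdl

abbrev PModel (S : Type) := Mdl S × S
abbrev Strat (S : Type) := PModel S → Set (S × S)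
abbrev MPath (S : Type) := ℕ → PModel S

/-- A demonic strategy outputs a subset of the edges of the given model. -/
def IsDemonic {S : Type} (σ : Strat S) : Prop :=
  ∀ Ms : PModel S, σ Ms ⊆ {e : S × S | Ms.1.rel e.1 e.2}

/-- An angelic strategy outputs a set of non-edges of the given model. -/
def IsAngelic {S : Type} (σ : Strat S) : Prop :=
  ∀ Ms : PModel S, σ Ms ⊆ {e : S × S | ¬ Ms.1.rel e.1 e.2}

/-! ### Demonic (SDL) paths -/

def DStep {S : Type} (σ : Strat S) (x y : PModel S) : Prop :=
  y.1 = x.1.remove (σ x) ∧ y.1.Serial ∧ y.1.rel x.2 y.2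

def DCompat {S : Type} (σ : Strat S) (π : MPath S) : Prop := ∀ i, DStep σ (π i) (π (i+1))

/-- `σ` is an `n`-strategy: on every compatible path each removed set has cost at most `n`. -/
def DBound {S : Type} (σ : Strat S) (n : ℕ) : Prop :=
  ∀ π : MPath S, DCompat σ π → ∀ i, (π i).1.costLe (σ (π i)) n

/-! ### Angelic (SCL) paths -/

def AStep {S : Type} (σ : Strat S) (x y : PModel S) : Prop :=
  y.1 = x.1.add (σ x) ∧ y.1.rel x.2 y.2

def ACompat {S : Type} (σ : Strat S) (π : MPath S) : Prop := ∀ i, AStep σ (π i) (π (i+1))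

def ABound {S : Type} (σ : Strat S) (n : ℕ) : Prop :=
  ∀ π : MPath S, ACompat σ π → ∀ i, (π i).1.costLe (σ (π i)) n

/-! ### Update (SUL) paths: angel budget `n`, demon budget `m` -/

def UStep {S : Type} (Sa Sd : Strat S) (n m : ℕ) (x y : PModel S) : Prop :=
  x.1.costLe (Sa x) n ∧ x.1.costLe (Sd x) m ∧
  y.1 = (x.1.remove (Sd x)).add (Sa x) ∧ y.1.Serial ∧ y.1.rel x.2 y.2

def UCompat {S : Type} (Sa Sd : Strat S) (n m : ℕ) (π : MPath S) : Prop :=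
  ∀ i, UStep Sa Sd n m (π i) (π (i+1))

/-! ## SDL -/

mutual
inductive SDLF : Type
  | atom : ℕ → SDLF
  | neg : SDLF → SDLF
  | and : SDLF → SDLF → SDLF
  | dia : ℕ → SDLP → SDLF
inductive SDLP : Type
  | nxt : SDLF → SDLP
  | untl : SDLF → SDLF → SDLP
  | rls : SDLF → SDLF → SDLP
end

mutual
def SDLSat {S : Type} : PModel S → SDLF → Prop
  | Ms, .atom p => Ms.2 ∈ Ms.1.val p
  | Ms, .neg φ => ¬ SDLSat Ms φ
  | Ms, .and φ χ => SDLSat Ms φ ∧ SDLSat Ms χ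
  | Ms, .dia n ψ => ∃ σ : Strat S, IsDemonic σ ∧ DBound σ n ∧
      ∀ π : MPath S, π 0 = Ms → DCompat σ π → SDLPSat π ψ
def SDLPSat {S : Type} : MPath S → SDLP → Prop
  | π, .nxt φ => SDLSat (π 1) φ
  | π, .untl φ χ => ∃ j, SDLSat (π j) χ ∧ ∀ i < j, SDLSat (π i) φ
  | π, .rls φ χ => (∀ j, SDLSat (π j) χ) ∨ ∃ k, SDLSat (π k) φ ∧ ∀ i ≤ k, SDLSat (π i) χ
end

/-! ## SCL -/

mutual
inductive SCLF : Type
  | atom : ℕ → SCLF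
  | neg : SCLF → SCLF
  | and : SCLF → SCLF → SCLF
  | dia : ℕ → SCLP → SCLF
inductive SCLP : Type
  | nxt : SCLF → SCLP
  | untl : SCLF → SCLF → SCLP
  | rls : SCLF → SCLF → SCLP
end

mutual
def SCLSat {S : Type} : PModel S → SCLF → Prop
  | Ms, .atom p => Ms.2 ∈ Ms.1.val p
  | Ms, .neg φ => ¬ SCLSat Ms φ
  | Ms, .and φ χ => SCLSat Ms φ ∧ SCLSat Ms χ
  | Ms, .dia n ψ => ∃ σ : Strat S, IsAngelic σ ∧ ABound σ n ∧
      ∀ π : MPath S, π 0 = Ms → ACompat σ π → SCLPSat π ψ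
def SCLPSat {S : Type} : MPath S → SCLP → Prop
  | π, .nxt φ => SCLSat (π 1) φ
  | π, .untl φ χ => ∃ j, SCLSat (π j) χ ∧ ∀ i < j, SCLSat (π i) φ
  | π, .rls φ χ => (∀ j, SCLSat (π j) χ) ∨ ∃ k, SCLSat (π k) φ ∧ ∀ i ≤ k, SCLSat (π i) χ
end

/-! ## SUL -/

/-- Coalitions `C ⊆ {∠, ★}`. -/
inductive Coal : Type
  | both : Coal
  | onlyAngel : Coal
  | onlyDemon : Coal
  | neither : Coal

mutual
inductive SULF : Type
  | atom : ℕ → SULF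
  | neg : SULF → SULF
  | and : SULF → SULF → SULF
  | strat : Coal → ℕ → ℕ → SULP → SULF
inductive SULP : Type
  | nxt : SULF → SULP
  | untl : SULF → SULF → SULP
  | rls : SULF → SULF → SULP
end

mutual
def SULSat {S : Type} : PModel S → SULF → Prop
  | Ms, .atom p => Ms.2 ∈ Ms.1.val p
  | Ms, .neg φ => ¬ SULSat Ms φ
  | Ms, .and φ χ => SULSat Ms φ ∧ SULSat Ms χ
  | Ms, .strat .both n m ψ =>
      -- ⟨⟨∠ⁿ,★ᵐ⟩⟩ψ
      ∃ Sa : Strat S, IsAngelic Sa ∧ ∃ Sd : Strat S, IsDemonic Sd ∧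
        ∀ π : MPath S, π 0 = Ms → UCompat Sa Sd n m π → SULPSat π ψ
  | Ms, .strat .onlyAngel n m ψ =>
      -- ⟨⟨∠^{n,m}⟩⟩ψ : angel has budget n, demon budget m
      ∃ Sa : Strat S, IsAngelic Sa ∧ ∀ Sd : Strat S, IsDemonic Sd →
        ∀ π : MPath S, π 0 = Ms → UCompat Sa Sd n m π → SULPSat π ψ
  | Ms, .strat .onlyDemon n m ψ =>
      -- ⟨⟨★^{n,m}⟩⟩ψ : demon has budget n, angel budget m
      ∃ Sd : Strat S, IsDemonic Sd ∧ ∀ Sa : Strat S, IsAngelic Sa →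
        ∀ π : MPath S, π 0 = Ms → UCompat Sa Sd m n π → SULPSat π ψ
  | Ms, .strat .neither n m ψ =>
      -- ⟨⟨∅^{n,m}⟩⟩ψ
      ∀ Sa : Strat S, IsAngelic Sa → ∀ Sd : Strat S, IsDemonic Sd →
        ∀ π : MPath S, π 0 = Ms → UCompat Sa Sd n m π → SULPSat π ψ
def SULPSat {S : Type} : MPath S → SULP → Prop
  | π, .nxt φ => SULSat (π 1) φ
  | π, .untl φ χ => ∃ j, SULSat (π j) χ ∧ ∀ i < j, SULSat (π i) φ
  | π, .rls φ χ => (∀ j, SULSat (π j) χ) ∨ ∃ k, SULSat (π k) φ ∧ ∀ i ≤ k, SULSat (π i) χ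
end

/-! ## Obstruction Logic -/

mutual
inductive OLF : Type
  | atom : ℕ → OLF
  | neg : OLF → OLF
  | and : OLF → OLF → OLF
  | dia : ℕ → OLP → OLF
inductive OLP : Type
  | nxt : OLF → OLP
  | untl : OLF → OLF → OLP
  | rls : OLF → OLF → OLP
end

/-- An OL `n`-strategy over the fixed model `M`. -/
def IsOLStrategy {S : Type} (M : Mdl S) (σ : S → Set (S × S)) (n : ℕ) : Prop :=
  ∀ s, σ s ⊆ {e : S × S | M.rel e.1 e.2} ∧ M.costLe (σ s) n ∧
    ∃ t, M.rel s t ∧ (s, t) ∉ σ s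

def OLCompat {S : Type} (M : Mdl S) (σ : S → Set (S × S)) (π : ℕ → S) : Prop :=
  ∀ i, M.rel (π i) (π (i+1)) ∧ (π i, π (i+1)) ∉ σ (π i)

mutual
def OLSat {S : Type} (M : Mdl S) : S → OLF → Prop
  | s, .atom p => s ∈ M.val p
  | s, .neg φ => ¬ OLSat M s φ
  | s, .and φ χ => OLSat M s φ ∧ OLSat M s χ
  | s, .dia n ψ => ∃ σ : S → Set (S × S), IsOLStrategy M σ n ∧
      ∀ π : ℕ → S, π 0 = s → OLCompat M σ π → OLPSat M π ψ
def OLPSat {S : Type} (M : Mdl S) : (ℕ → S) → OLP → Prop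
  | π, .nxt φ => OLSat M (π 1) φ
  | π, .untl φ χ => ∃ j, OLSat M (π j) χ ∧ ∀ i < j, OLSat M (π i) φ
  | π, .rls φ χ => (∀ j, OLSat M (π j) χ) ∨ ∃ k, OLSat M (π k) φ ∧ ∀ i ≤ k, OLSat M (π i) χ
end

/-! ## CTL -/

inductive CTLF : Type
  | atom : ℕ → CTLF
  | neg : CTLF → CTLF
  | and : CTLF → CTLF → CTLF
  | ax : CTLF → CTLF
  | ex : CTLF → CTLF
  | au : CTLF → CTLF → CTLF
  | ar : CTLF → CTLF → CTLF
  | eu : CTLF → CTLF → CTLF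
  | er : CTLF → CTLF → CTLF

def IsPath {S : Type} (M : Mdl S) (π : ℕ → S) : Prop := ∀ i, M.rel (π i) (π (i+1))

def CTLSat {S : Type} (M : Mdl S) : S → CTLF → Prop
  | s, .atom p => s ∈ M.val p
  | s, .neg φ => ¬ CTLSat M s φ
  | s, .and φ χ => CTLSat M s φ ∧ CTLSat M s χ
  | s, .ax φ => ∀ π : ℕ → S, π 0 = s → IsPath M π → CTLSat M (π 1) φ
  | s, .ex φ => ∃ π : ℕ → S, π 0 = s ∧ IsPath M π ∧ CTLSat M (π 1) φ
  | s, .au φ χ => ∀ π : ℕ → S, π 0 = s → IsPath M π →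
      ∃ j, CTLSat M (π j) χ ∧ ∀ i < j, CTLSat M (π i) φ
  | s, .ar φ χ => ∀ π : ℕ → S, π 0 = s → IsPath M π →
      ((∀ j, CTLSat M (π j) χ) ∨ ∃ k, CTLSat M (π k) φ ∧ ∀ i ≤ k, CTLSat M (π i) χ)
  | s, .eu φ χ => ∃ π : ℕ → S, π 0 = s ∧ IsPath M π ∧
      ∃ j, CTLSat M (π j) χ ∧ ∀ i < j, CTLSat M (π i) φ
  | s, .er φ χ => ∃ π : ℕ → S, π 0 = s ∧ IsPath M π ∧
      ((∀ j, CTLSat M (π j) χ) ∨ ∃ k, CTLSat M (π k) φ ∧ ∀ i ≤ k, CTLSat M (π i) χ)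

/-! ## Chain-fan models -/

/-- The chain-fan model with chain states `s₁,…,s_{n+1}` (encoded as `Fin (n+1)`,
with `sᵢ = i-1`) and fan states `t₁,…,t_{k+1}` (encoded as `Fin (k+1)`, with
`tⱼ = j-1`): edges `sᵢ → s_{i+1}`, `s_{n+1} → tⱼ` for every `j`, and self-loops
on every `tⱼ`; the atom `p` (atom `0`) is true exactly at `t₁`, and all edge
costs are `1`.  `M_{n+2}` of the paper is `chainFan n (n+1)` and `M_{n+3}` is
`chainFan n (n+2)`. -/
def chainFan (n k : ℕ) : Mdl (Fin (n+1) ⊕ Fin (k+1)) :=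
  { rel := fun a b =>
      match a, b with
      | .inl i, .inl j => (j : ℕ) = (i : ℕ) + 1
      | .inl i, .inr _ => (i : ℕ) = n
      | .inr i, .inr j => i = j
      | .inr _, .inl _ => False
    val := fun q => {a | q = 0 ∧ a = Sum.inr 0}
    cost := fun _ _ => 1 }

/-! ## Resource bounds of OL formulas -/

mutual
/-- All resource bounds occurring in the OL state formula are at most `n`. -/
def OLF.boundsLe : OLF → ℕ → Prop
  | .atom _, _ => True
  | .neg φ, n => φ.boundsLe n
  | .and φ χ, n => φ.boundsLe n ∧ χ.boundsLe n
  | .dia m ψ, n => m ≤ n ∧ ψ.boundsLe n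
/-- All resource bounds occurring in the OL path formula are at most `n`. -/
def OLP.boundsLe : OLP → ℕ → Prop
  | .nxt φ, n => φ.boundsLe n
  | .untl φ χ, n => φ.boundsLe n ∧ χ.boundsLe n
  | .rls φ χ, n => φ.boundsLe n ∧ χ.boundsLe n
end

/-! ## Auxiliary material for the proof -/

section ChainFanAux

open Sum

/-- The matching relation between states of `chainFan n k₁` and `chainFan n k₂`. -/
def rR (n k₁ k₂ : ℕ) : (Fin (n+1) ⊕ Fin (k₁+1)) → (Fin (n+1) ⊕ Fin (k₂+1)) → Prop
  | .inl i, .inl i' => (i : ℕ) = (i' : ℕ)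
  | .inr j, .inr j' => ((j : ℕ) = 0 ↔ (j' : ℕ) = 0)
  | _, _ => False

lemma rR_symm {n k₁ k₂ : ℕ} {x y} (h : rR n k₁ k₂ x y) : rR n k₂ k₁ y x := by
  cases x <;> cases y <;> simp_all [rR]

lemma chainFan_serial (n k : ℕ) (s : Fin (n+1) ⊕ Fin (k+1)) :
    ∃ t, (chainFan n k).rel s t := by
  cases s with
  | inl i =>
    rcases lt_or_ge (i : ℕ) n with h | h
    · exact ⟨.inl ⟨(i : ℕ)+1, by omega⟩, by simp [chainFan]⟩
    · refine ⟨.inr 0, ?_⟩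
      have : (i : ℕ) < n + 1 := i.isLt
      simp only [chainFan]
      omega
  | inr j => exact ⟨.inr j, by simp [chainFan]⟩

lemma chainFan_cost_sum {n k : ℕ} (F : Finset ((Fin (n+1) ⊕ Fin (k+1)) × (Fin (n+1) ⊕ Fin (k+1)))) :
    ∑ e ∈ F, (chainFan n k).cost e.1 e.2 = F.card := by
  simp [chainFan]

/-- A free fan edge: at least one edge from the fan state to a non-`t₁` state is
not removed by an `m`-strategy when `m ≤ n < k`. -/
lemma fan_avail {n k m : ℕ} (hm : m ≤ n) (hk : n < k)
    {σ : (Fin (n+1) ⊕ Fin (k+1)) → Set _} (hσ : IsOLStrategy (chainFan n k) σ m) :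
    ∃ j : Fin (k+1), (j : ℕ) ≠ 0 ∧
      ((Sum.inl (Fin.last n), Sum.inr j) : _ × _) ∉ σ (Sum.inl (Fin.last n)) := by
  obtain ⟨-, ⟨F, hF, hsum⟩, -⟩ := hσ (Sum.inl (Fin.last n))
  rw [chainFan_cost_sum] at hsum
  by_contra hcon
  push_neg at hcon
  have hinj : Function.Injective
      (fun j : Fin k => ((Sum.inl (Fin.last n), Sum.inr j.succ) :
        (Fin (n+1) ⊕ Fin (k+1)) × (Fin (n+1) ⊕ Fin (k+1)))) := by
    intro a b hab
    simpa [Fin.succ_inj] using hab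
  have hsub : (Finset.univ.image (fun j : Fin k =>
      ((Sum.inl (Fin.last n), Sum.inr j.succ) :
        (Fin (n+1) ⊕ Fin (k+1)) × (Fin (n+1) ⊕ Fin (k+1))))) ⊆ F := by
    intro e he
    simp only [Finset.mem_image, Finset.mem_univ, true_and] at he
    obtain ⟨j, rfl⟩ := he
    have := hcon j.succ (by simp [Fin.val_succ])
    rw [hF] at this
    exact this
  have hcard := Finset.card_le_card hsub
  rw [Finset.card_image_of_injective _ hinj, Finset.card_univ, Fintype.card_fin] at hcard
  omega

lemma one_le_of_mem {n k m : ℕ}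
    {σ : (Fin (n+1) ⊕ Fin (k+1)) → Set _} (hσ : IsOLStrategy (chainFan n k) σ m)
    (h : ((Sum.inl (Fin.last n), Sum.inr 0) : _ × _) ∈ σ (Sum.inl (Fin.last n))) :
    1 ≤ m := by
  obtain ⟨-, ⟨F, hF, hsum⟩, -⟩ := hσ (Sum.inl (Fin.last n))
  rw [chainFan_cost_sum] at hsum
  rw [hF] at h
  have : F.Nonempty := ⟨_, h⟩
  have := Finset.card_pos.mpr this
  omega

/-- Transfer a demon strategy from `chainFan n k₁` to `chainFan n k₂`. -/
lemma dia_transfer {n k₁ k₂ m : ℕ} (hm : m ≤ n) (hk₁ : n < k₁) (hk₂ : n < k₂)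
    {σ₁ : (Fin (n+1) ⊕ Fin (k₁+1)) → Set _} (hσ₁ : IsOLStrategy (chainFan n k₁) σ₁ m) :
    ∃ σ₂ : (Fin (n+1) ⊕ Fin (k₂+1)) → Set _, IsOLStrategy (chainFan n k₂) σ₂ m ∧
      ∀ x y, rR n k₁ k₂ x y → ∀ y', (chainFan n k₂).rel y y' → (y, y') ∉ σ₂ y →
        ∃ x', (chainFan n k₁).rel x x' ∧ (x, x') ∉ σ₁ x ∧ rR n k₁ k₂ x' y' := by
  classical
  set B : Prop := ((Sum.inl (Fin.last n), Sum.inr 0) : _ × _) ∈ σ₁ (Sum.inl (Fin.last n))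
    with hBdef
  set σ₂ : (Fin (n+1) ⊕ Fin (k₂+1)) → Set ((Fin (n+1) ⊕ Fin (k₂+1)) × (Fin (n+1) ⊕ Fin (k₂+1))) :=
    fun s => {e | s = Sum.inl (Fin.last n) ∧
      e = (Sum.inl (Fin.last n), Sum.inr 0) ∧ B} with hσ₂def
  have h1lt : (1 : ℕ) < k₂ + 1 := by omega
  refine ⟨σ₂, ?_, ?_⟩
  · intro s
    refine ⟨?_, ?_, ?_⟩
    · rintro ⟨a, b⟩ ⟨rfl, he, -⟩
      obtain ⟨rfl, rfl⟩ := Prod.mk.injEq .. ▸ he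
      simp [chainFan]
    · by_cases hB : B
      · by_cases hs : s = Sum.inl (Fin.last n)
        · refine ⟨{(Sum.inl (Fin.last n), Sum.inr 0)}, ?_, ?_⟩
          · ext e; simp [hσ₂def, hs, hB]
          · rw [chainFan_cost_sum, Finset.card_singleton]
            exact one_le_of_mem hσ₁ hB
        · refine ⟨∅, ?_, by simp⟩
          ext e; simp [hσ₂def, hs]
      · refine ⟨∅, ?_, by simp⟩
        ext e; simp [hσ₂def, hB]
    · by_cases hs : s = Sum.inl (Fin.last n)
      · refine ⟨Sum.inr ⟨1, h1lt⟩, ?_, ?_⟩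
        · subst hs; simp [chainFan]
        · rintro ⟨-, he, -⟩
          have h2 := congrArg Fin.val (Sum.inr.inj (Prod.mk.injEq .. ▸ he).2)
          simp at h2
      · obtain ⟨t, ht⟩ := chainFan_serial n k₂ s
        exact ⟨t, ht, by rintro ⟨h, -⟩; exact hs h⟩
  · rintro x y hxy y' hrel hnot
    cases x with
    | inl i =>
      cases y with
      | inl i' =>
        have hii : (i : ℕ) = (i' : ℕ) := hxy
        rcases lt_or_ge (i : ℕ) n with hlt | hge
        · -- chain step
          obtain ⟨t, ht, htn⟩ := (hσ₁ (Sum.inl i)).2.2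
          cases y' with
          | inl j' =>
            have hj' : (j' : ℕ) = (i' : ℕ) + 1 := hrel
            cases t with
            | inl j =>
              have hj : (j : ℕ) = (i : ℕ) + 1 := ht
              exact ⟨Sum.inl j, ht, htn, by simp [rR]; omega⟩
            | inr j =>
              have : (i : ℕ) = n := ht
              omega
          | inr j' =>
            have : (i' : ℕ) = n := hrel
            omega
        · -- fan step
          have hin : (i : ℕ) = n := by have := i.isLt; omega
          have hi'n : (i' : ℕ) = n := by omega
          have hiL : i = Fin.last n := by
            apply Fin.ext; simpa [Fin.val_last] using hin
          have hi'L : i' = Fin.last n := by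
            apply Fin.ext; simpa [Fin.val_last] using hi'n
          cases y' with
          | inl j' =>
            have hj' : (j' : ℕ) = (i' : ℕ) + 1 := hrel
            have := j'.isLt; omega
          | inr j' =>
            by_cases hj0 : (j' : ℕ) = 0
            · have hnB : ¬ B := by
                intro hB
                exact hnot ⟨by rw [hi'L], by
                  have : j' = 0 := Fin.ext (by simpa using hj0)
                  rw [hi'L, this], hB⟩
              refine ⟨Sum.inr 0, ?_, ?_, ?_⟩
              · exact hin
              · rw [hiL]; exact hnB
              · simp [rR, hj0]
            · obtain ⟨j, hjne, hjfree⟩ := fan_avail hm hk₁ hσ₁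
              refine ⟨Sum.inr j, ?_, ?_, ?_⟩
              · exact hin
              · rw [hiL]; exact hjfree
              · simp [rR, hjne, hj0]
      | inr j' => exact absurd hxy (by simp [rR])
    | inr j =>
      cases y with
      | inl i' => exact absurd hxy (by simp [rR])
      | inr j' =>
        cases y' with
        | inl => exact absurd hrel (by simp [chainFan])
        | inr j'' =>
          have hj : j' = j'' := hrel
          obtain ⟨t, ht, htn⟩ := (hσ₁ (Sum.inr j)).2.2
          have ht' : t = Sum.inr j := by
            cases t with
            | inl => exact absurd ht (by simp [chainFan])
            | inr jj => have h2 : j = jj := ht; rw [h2]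
          refine ⟨Sum.inr j, ?_, ?_, ?_⟩
          · show j = j; rfl
          · rw [ht'] at htn; exact htn
          · have := hxy
            simp only [rR] at this ⊢
            rw [← hj]; exact this

/-- Dependent-choice path construction. -/
lemma exists_path {α : Type} (x : α) (P : ℕ → α → Prop) (Q : ℕ → α → α → Prop)
    (h0 : P 0 x) (hstep : ∀ i a, P i a → ∃ b, Q i a b ∧ P (i+1) b) :
    ∃ π : ℕ → α, π 0 = x ∧ (∀ i, P i (π i)) ∧ ∀ i, Q i (π i) (π (i+1)) := by
  choose f hf₁ hf₂ using hstep
  let F : ∀ i : ℕ, {a : α // P i a} := fun i =>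
    Nat.rec ⟨x, h0⟩ (fun i p => ⟨f i p.1 p.2, hf₂ i p.1 p.2⟩) i
  exact ⟨fun i => (F i).1, rfl, fun i => (F i).2, fun i => hf₁ i (F i).1 (F i).2⟩

mutual
theorem keyF (n : ℕ) (φ : OLF) (hb : φ.boundsLe n) :
    ∀ k₁ k₂, n < k₁ → n < k₂ → ∀ x y, rR n k₁ k₂ x y →
    OLSat (chainFan n k₁) x φ → OLSat (chainFan n k₂) y φ := by
  intro k₁ k₂ hk₁ hk₂ x y hxy hsat
  cases φ with
  | atom p =>
    simp only [OLSat, chainFan, Set.mem_setOf_eq] at hsat ⊢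
    obtain ⟨rfl, rfl⟩ := hsat
    cases y with
    | inl => exact absurd hxy (by simp [rR])
    | inr j' =>
      have : ((0 : Fin (k₁+1)) : ℕ) = 0 ↔ (j' : ℕ) = 0 := hxy
      have hj' : (j' : ℕ) = 0 := by simpa using this
      exact ⟨rfl, by rw [Fin.ext (by simpa using hj' : (j' : ℕ) = ((0 : Fin (k₂+1)) : ℕ))]⟩
  | neg φ =>
    simp only [OLSat] at hsat ⊢
    intro hy
    exact hsat (keyF n φ hb k₂ k₁ hk₂ hk₁ y x (rR_symm hxy) hy)
  | and φ χ =>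
    simp only [OLSat] at hsat ⊢
    exact ⟨keyF n φ hb.1 k₁ k₂ hk₁ hk₂ x y hxy hsat.1,
      keyF n χ hb.2 k₁ k₂ hk₁ hk₂ x y hxy hsat.2⟩
  | dia m ψ =>
    obtain ⟨hm, hbψ⟩ := hb
    simp only [OLSat] at hsat ⊢
    obtain ⟨σ₁, hσ₁, hforce⟩ := hsat
    obtain ⟨σ₂, hσ₂, hback⟩ := dia_transfer hm hk₁ hk₂ hσ₁
    refine ⟨σ₂, hσ₂, ?_⟩
    intro π₂ hπ0 hcompat
    obtain ⟨π₁, hπ₁0, hP, hQ⟩ := exists_path x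
      (fun i a => rR n k₁ k₂ a (π₂ i))
      (fun i a b => (chainFan n k₁).rel a b ∧ (a, b) ∉ σ₁ a)
      (by show rR n k₁ k₂ x (π₂ 0); rw [hπ0]; exact hxy)
      (fun i a ha => by
        obtain ⟨x', h1, h2, h3⟩ := hback a (π₂ i) ha (π₂ (i+1)) (hcompat i).1 (hcompat i).2
        exact ⟨x', ⟨h1, h2⟩, h3⟩)
    have hcompat₁ : OLCompat (chainFan n k₁) σ₁ π₁ := fun i => hQ i
    have hsatψ := hforce π₁ hπ₁0 hcompat₁
    exact keyP n ψ hbψ k₁ k₂ hk₁ hk₂ π₁ π₂ hP hsatψ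

theorem keyP (n : ℕ) (ψ : OLP) (hb : ψ.boundsLe n) :
    ∀ k₁ k₂, n < k₁ → n < k₂ → ∀ π₁ π₂, (∀ i, rR n k₁ k₂ (π₁ i) (π₂ i)) →
    OLPSat (chainFan n k₁) π₁ ψ → OLPSat (chainFan n k₂) π₂ ψ := by
  intro k₁ k₂ hk₁ hk₂ π₁ π₂ hR hsat
  cases ψ with
  | nxt φ =>
    simp only [OLPSat] at hsat ⊢
    exact keyF n φ hb k₁ k₂ hk₁ hk₂ _ _ (hR 1) hsat
  | untl φ χ =>
    simp only [OLPSat] at hsat ⊢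
    obtain ⟨j, hχ, hφ⟩ := hsat
    exact ⟨j, keyF n χ hb.2 k₁ k₂ hk₁ hk₂ _ _ (hR j) hχ,
      fun i hi => keyF n φ hb.1 k₁ k₂ hk₁ hk₂ _ _ (hR i) (hφ i hi)⟩
  | rls φ χ =>
    simp only [OLPSat] at hsat ⊢
    rcases hsat with h | ⟨k, hφ, hχ⟩
    · exact Or.inl fun j => keyF n χ hb.2 k₁ k₂ hk₁ hk₂ _ _ (hR j) (h j)
    · exact Or.inr ⟨k, keyF n φ hb.1 k₁ k₂ hk₁ hk₂ _ _ (hR k) hφ,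
        fun i hi => keyF n χ hb.2 k₁ k₂ hk₁ hk₂ _ _ (hR i) (hχ i hi)⟩
end

end ChainFanAux
/-- For every `n` and every OL formula `φ` whose resource bounds are all at
most `n`, the chain-fan models `M_{n+2}` and `M_{n+3}` are OL-indistinguishable
at their initial states `s₁`. -/
theorem chainFan_OL_indistinguishable (n : ℕ) (φ : OLF) (h : φ.boundsLe n) :
    OLSat (chainFan n (n+1)) (Sum.inl 0) φ ↔
    OLSat (chainFan n (n+2)) (Sum.inl 0) φ := by
  have h0 : rR n (n+1) (n+2) (Sum.inl 0) (Sum.inl 0) := rfl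
  constructor
  · exact fun hs => keyF n φ h (n+1) (n+2) (by omega) (by omega) _ _ h0 hs
  · exact fun hs => keyF n φ h (n+2) (n+1) (by omega) (by omega) _ _ (rR_symm h0) hs
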